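/- Let M be a right S-module which is ℏ-torsion-free and ℏ-adically separated and complete as an R-module (topologically free), and such that M₀ := M/ℏM is a flat right module over S₀ := S/ℏS. Then Tor_i^R(M ⊗_S R_χ, k) = 0 for all i ≥ 1, where R_χ denotes R viewed as a left S-module via χ and k = R/ℏR; in particular M ⊗_S R_χ is ℏ-torsion-free, i.e. it is a flat formal deformation of M₀ ⊗_{S₀} k_{χ₀}, and (M ⊗_S R_χ) ⊗_R k ≅ M₀ ⊗_{S₀} k_{χ₀}. -/

import Mathlib

noncomputable section

open PowerSeries

/-- Let `R := k[[ℏ]]`, and let `S` be a unital associative `R`-algebra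
which is a flat formal deformation of the polynomial ring in `n` variables: `S` is
`ℏ`-torsion-free, `ℏ`-adically separated and complete, and `S₀ := S/ℏS` is isomorphic as
a `k`-algebra to `k[x₁,…,xₙ]` (here `S₀` is presented abstractly, via a surjection
`π : S → S₀` with kernel `ℏS`).  Let `χ : S → R` be a character with reduction
`χ₀ : S₀ → k`.  Let `M` be an `S`-module which is `ℏ`-torsion-free and `ℏ`-adically
separated and complete, and such that `M₀ := M/ℏM` (presented abstractly via a
surjection `ρ : M → M₀` with kernel `ℏM`) is flat over `S₀`.  Then
`M ⊗_S R_χ ≅ M / (ker χ)·M` is `ℏ`-torsion-free — i.e. `Tor_i^R(M ⊗_S R_χ, k) = 0` for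
all `i ≥ 1`, so `M ⊗_S R_χ` is a flat formal deformation of `M₀ ⊗_{S₀} k_{χ₀}` — and
`(M ⊗_S R_χ) ⊗_R k ≅ M₀ ⊗_{S₀} k_{χ₀}` (the latter identified with
`M₀ / (ker χ₀)·M₀`). -/
theorem hamiltonian_reduction_flat {k : Type} [Field k] (n : ℕ)
    -- the deformed algebra S
    (S : Type) [Ring S] [Algebra (PowerSeries k) S]
    (hStf : ∀ s : S, (PowerSeries.X : PowerSeries k) • s = 0 → s = 0)
    (hScompl : IsAdicComplete (Ideal.span {(PowerSeries.X : PowerSeries k)}) S)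
    -- its special fibre S₀ ≅ k[x₁,…,xₙ]
    (S₀ : Type) [CommRing S₀] [Algebra k S₀]
    (π : S →+* S₀) (hπsurj : Function.Surjective π)
    (hπker : ∀ s : S, π s = 0 ↔
      s ∈ Ideal.span {algebraMap (PowerSeries k) S PowerSeries.X})
    (hpoly : Nonempty (S₀ ≃ₐ[k] MvPolynomial (Fin n) k))
    -- the character χ and its reduction χ₀
    (χ : S →+* PowerSeries k)
    (hχ : ∀ r : PowerSeries k, χ (algebraMap (PowerSeries k) S r) = r)
    (χ₀ : S₀ →+* k)
    (hχ₀ : ∀ s : S, χ₀ (π s) = PowerSeries.constantCoeff (χ s))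
    -- the module M, topologically free over k[[ℏ]]
    (M : Type) [AddCommGroup M] [Module S M]
    [Module (PowerSeries k) M] [IsScalarTower (PowerSeries k) S M]
    (hMtf : ∀ x : M, (PowerSeries.X : PowerSeries k) • x = 0 → x = 0)
    (hMcompl : IsAdicComplete (Ideal.span {(PowerSeries.X : PowerSeries k)}) M)
    -- its special fibre M₀ = M/ℏM, flat over S₀
    (M₀ : Type) [AddCommGroup M₀] [Module S₀ M₀]
    (ρ : M →+ M₀) (hρsurj : Function.Surjective ρ)
    (hρcompat : ∀ (s : S) (x : M), ρ (s • x) = π s • ρ x)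
    (hρker : ∀ x : M, ρ x = 0 ↔ ∃ y : M, x = (PowerSeries.X : PowerSeries k) • y)
    (hflat : Module.Flat S₀ M₀) :
    -- (1) the reduction M/(ker χ)M is ℏ-torsion-free (all higher Tor's over k[[ℏ]]
    --     against the residue field vanish): it is a flat formal deformation
    (∀ z : M ⧸ (Submodule.span (PowerSeries k)
        {x : M | ∃ s ∈ RingHom.ker χ, ∃ y : M, x = s • y}),
      (PowerSeries.X : PowerSeries k) • z = 0 → z = 0)
    -- (2) its special fibre is M₀ ⊗_{S₀} k_{χ₀} = M₀/(ker χ₀)M₀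
    ∧ Nonempty
        ((M ⧸ (Submodule.span (PowerSeries k)
            {x : M | ∃ s ∈ RingHom.ker χ, ∃ y : M, x = s • y}
          ⊔ Submodule.span (PowerSeries k)
            {x : M | ∃ y : M, x = (PowerSeries.X : PowerSeries k) • y}))
        ≃+ (M₀ ⧸ (Submodule.span S₀
            {x : M₀ | ∃ s ∈ RingHom.ker χ₀, ∃ y : M₀, x = s • y}))) := by
  classical
  haveI := hflat
  set N : Submodule (PowerSeries k) M := Submodule.span (PowerSeries k)
      {x : M | ∃ s ∈ RingHom.ker χ, ∃ y : M, x = s • y} with hN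
  set P : Submodule (PowerSeries k) M := Submodule.span (PowerSeries k)
      {x : M | ∃ y : M, x = (PowerSeries.X : PowerSeries k) • y} with hP
  set Q₀ : Submodule S₀ M₀ := Submodule.span S₀
      {x : M₀ | ∃ s ∈ RingHom.ker χ₀, ∃ y : M₀, x = s • y} with hQ
  have halgS : ∀ (r : PowerSeries k) (x : M),
      r • x = (algebraMap (PowerSeries k) S r) • x :=
    fun r x => (algebraMap_smul S r x).symm
  have hπX : π (algebraMap (PowerSeries k) S PowerSeries.X) = 0 :=
    (hπker _).mpr (Ideal.subset_span (Set.mem_singleton _))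
  have hρsmul : ∀ (r : PowerSeries k) (x : M),
      ρ (r • x) = π (algebraMap (PowerSeries k) S r) • ρ x := by
    intro r x
    rw [halgS r x, hρcompat]
  have hρX : ∀ x : M, ρ ((PowerSeries.X : PowerSeries k) • x) = 0 := by
    intro x
    rw [hρsmul, hπX, zero_smul]
  have hcomm : ∀ (r : PowerSeries k) (C : S) (m : M), C • (r • m) = r • (C • m) := by
    intro r C m
    rw [halgS r m, smul_smul, ← Algebra.commutes, mul_smul, ← halgS]
  -- extraction of finite sums from N
  have hNsum : ∀ v, v ∈ N → ∃ (ι : Type) (_ : Fintype ι) (s : ι → S) (y : ι → M),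
      (∀ i, χ (s i) = 0) ∧ v = ∑ i, s i • y i := by
    intro v hv
    rw [hN] at hv
    obtain ⟨m, f, g, hsum⟩ := Submodule.mem_span_set'.mp hv
    choose s hs y hy using fun (i : Fin m) => (g i).2
    refine ⟨Fin m, inferInstance, fun i => algebraMap (PowerSeries k) S (f i) * s i,
      y, ?_, ?_⟩
    · intro i
      rw [map_mul, hχ, RingHom.mem_ker.mp (hs i), mul_zero]
    · rw [← hsum]
      refine Finset.sum_congr rfl fun i _ => ?_
      rw [hy i, mul_smul, ← halgS]
  -- N is stable under the S-action
  have hNclosed : ∀ (C : S) (v : M), v ∈ N → C • v ∈ N := by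
    intro C v hv
    refine Submodule.span_induction ?_ ?_ ?_ ?_ hv
    · rintro x ⟨s, hs, y, rfl⟩
      rw [smul_smul]
      exact Submodule.subset_span
        ⟨C * s, RingHom.mem_ker.mpr (by rw [map_mul, RingHom.mem_ker.mp hs, mul_zero]),
          y, rfl⟩
    · rw [smul_zero]; exact Submodule.zero_mem N
    · intro a b _ _ ha hb
      rw [smul_add]; exact N.add_mem ha hb
    · intro r a _ ha
      rw [hcomm]; exact N.smul_mem r ha
  -- Part (1)
  have part1 : ∀ z : M ⧸ N, (PowerSeries.X : PowerSeries k) • z = 0 → z = 0 := by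
    intro z hz
    obtain ⟨x, rfl⟩ := Submodule.Quotient.mk_surjective N z
    rw [← Submodule.Quotient.mk_smul, Submodule.Quotient.mk_eq_zero] at hz
    rw [Submodule.Quotient.mk_eq_zero]
    obtain ⟨ι, hι, s, y, hs, heq⟩ := hNsum _ hz
    have hrel : ∑ i, π (s i) • ρ (y i) = 0 := by
      have h := congrArg ρ heq
      rw [hρX, map_sum] at h
      simp_rw [hρcompat] at h
      exact h.symm
    obtain ⟨κ, a, w, h1, h2⟩ := Module.Flat.isTrivialRelation_of_sum_smul_eq_zero hrel
    have h1' : ∀ i, ρ (y i) = ∑ j, a i j • w j := fun i => h1 i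
    have h2' : ∀ j, ∑ i, π (s i) * a i j = 0 := fun j => h2 j
    choose A hA using fun (i : ι) (j : Fin κ) => hπsurj (a i j)
    choose W hW using fun (j : Fin κ) => hρsurj (w j)
    have hz' : ∀ i, ∃ zi, y i - ∑ j, A i j • W j = (PowerSeries.X : PowerSeries k) • zi := by
      intro i
      rw [← hρker, map_sub, map_sum]
      simp_rw [hρcompat, hA, hW]
      rw [h1' i, sub_self]
    choose zz hzz using hz'
    have hC : ∀ j, ∃ Cj : S, χ Cj = 0 ∧
        (∑ i, s i * A i j) = Cj * algebraMap (PowerSeries k) S PowerSeries.X := by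
      intro j
      have hmem : (∑ i, s i * A i j) ∈
          Ideal.span {algebraMap (PowerSeries k) S PowerSeries.X} := by
        rw [← hπker, map_sum]
        simp_rw [map_mul, hA]
        exact h2' j
      rw [Ideal.span, Submodule.mem_span_singleton] at hmem
      obtain ⟨Cj, hCj⟩ := hmem
      rw [smul_eq_mul] at hCj
      have h0 : χ Cj * PowerSeries.X = 0 := by
        have h' := congrArg χ hCj
        rw [map_sum, map_mul, hχ] at h'
        rw [h']
        exact Finset.sum_eq_zero fun i _ => by rw [map_mul, hs i, zero_mul]
      refine ⟨Cj, ?_, hCj.symm⟩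
      rcases mul_eq_zero.mp h0 with h | h
      · exact h
      · exact absurd h PowerSeries.X_ne_zero
    choose C hCχ hCeq using hC
    have main : (PowerSeries.X : PowerSeries k) • x =
        (PowerSeries.X : PowerSeries k) • ((∑ j, C j • W j) + ∑ i, s i • zz i) := by
      rw [heq]
      have hy : ∀ i, y i = (PowerSeries.X : PowerSeries k) • zz i + ∑ j, A i j • W j :=
        fun i => sub_eq_iff_eq_add.mp (hzz i)
      calc ∑ i, s i • y i
          = ∑ i, ((PowerSeries.X : PowerSeries k) • (s i • zz i)
              + ∑ j, (s i * A i j) • W j) := by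
            refine Finset.sum_congr rfl fun i _ => ?_
            rw [hy i, smul_add, hcomm, Finset.smul_sum]
            simp_rw [smul_smul]
        _ = (PowerSeries.X : PowerSeries k) • (∑ i, s i • zz i)
              + ∑ j, (∑ i, s i * A i j) • W j := by
            rw [Finset.sum_add_distrib, Finset.smul_sum, Finset.sum_comm]
            simp_rw [Finset.sum_smul]
        _ = (PowerSeries.X : PowerSeries k) • ((∑ j, C j • W j) + ∑ i, s i • zz i) := by
            have hW' : ∑ j, (∑ i, s i * A i j) • W j =
                (PowerSeries.X : PowerSeries k) • ∑ j, C j • W j := by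
              rw [Finset.smul_sum]
              exact Finset.sum_congr rfl fun j _ => by
                rw [hCeq j, mul_smul, ← halgS, hcomm]
            rw [hW', smul_add]
            exact add_comm _ _
    have hxeq : x = (∑ j, C j • W j) + ∑ i, s i • zz i := by
      have h0 : (PowerSeries.X : PowerSeries k) •
          (x - ((∑ j, C j • W j) + ∑ i, s i • zz i)) = 0 := by
        rw [smul_sub, main, sub_self]
      exact sub_eq_zero.mp (hMtf _ h0)
    rw [hxeq]
    exact N.add_mem
      (Submodule.sum_mem _ fun j _ =>
        Submodule.subset_span ⟨C j, RingHom.mem_ker.mpr (hCχ j), W j, rfl⟩)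
      (Submodule.sum_mem _ fun i _ =>
        Submodule.subset_span ⟨s i, RingHom.mem_ker.mpr (hs i), zz i, rfl⟩)
  refine ⟨part1, ?_⟩
  -- Part (2)
  have hπalg : ∀ u : PowerSeries k, PowerSeries.constantCoeff u = 0 →
      π (algebraMap (PowerSeries k) S u) = 0 := by
    intro u hu
    obtain ⟨v, rfl⟩ := PowerSeries.X_dvd_iff.mpr hu
    rw [map_mul, map_mul, hπX, zero_mul]
  let φ : M →+ M₀ ⧸ Q₀ := (Submodule.mkQ Q₀).toAddMonoidHom.comp ρ
  have hφ : ∀ x : M, φ x = Submodule.Quotient.mk (ρ x) := fun x => rfl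
  have hφsurj : Function.Surjective φ := by
    intro q
    obtain ⟨m₀, rfl⟩ := Submodule.Quotient.mk_surjective Q₀ q
    obtain ⟨x, rfl⟩ := hρsurj m₀
    exact ⟨x, rfl⟩
  have hker1 : ∀ v, v ∈ N → ρ v ∈ Q₀ := by
    intro v hv
    refine Submodule.span_induction ?_ ?_ ?_ ?_ hv
    · rintro x ⟨s, hs, y, rfl⟩
      rw [hρcompat]
      exact Submodule.subset_span
        ⟨π s, RingHom.mem_ker.mpr (by rw [hχ₀, RingHom.mem_ker.mp hs, map_zero]), ρ y, rfl⟩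
    · rw [map_zero]; exact Submodule.zero_mem Q₀
    · intro a b _ _ ha hb
      rw [map_add]; exact Q₀.add_mem ha hb
    · intro r a _ ha
      rw [hρsmul]; exact Q₀.smul_mem _ ha
  have hker2 : ∀ v, v ∈ P → ρ v = 0 := by
    intro v hv
    refine Submodule.span_induction ?_ ?_ ?_ ?_ hv
    · rintro x ⟨y, rfl⟩
      exact hρX y
    · exact map_zero ρ
    · intro a b _ _ ha hb
      rw [map_add, ha, hb, add_zero]
    · intro r a _ ha
      rw [hρsmul, ha, smul_zero]
  have hlift : ∀ m₀, m₀ ∈ Q₀ → ∃ v ∈ N, ρ v = m₀ := by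
    intro m₀ hm₀
    refine Submodule.span_induction ?_ ?_ ?_ ?_ hm₀
    · rintro x ⟨t, ht, y₀, rfl⟩
      obtain ⟨s₁, hs₁⟩ := hπsurj t
      have hconst : PowerSeries.constantCoeff (χ s₁) = 0 := by
        rw [← hχ₀, hs₁]; exact RingHom.mem_ker.mp ht
      have hχs : χ (s₁ - algebraMap (PowerSeries k) S (χ s₁)) = 0 := by
        rw [map_sub, hχ, sub_self]
      have hπs : π (s₁ - algebraMap (PowerSeries k) S (χ s₁)) = t := by
        rw [map_sub, hπalg _ hconst, sub_zero, hs₁]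
      obtain ⟨y, rfl⟩ := hρsurj y₀
      refine ⟨(s₁ - algebraMap (PowerSeries k) S (χ s₁)) • y, ?_, ?_⟩
      · exact Submodule.subset_span ⟨_, RingHom.mem_ker.mpr hχs, y, rfl⟩
      · rw [hρcompat, hπs]
    · exact ⟨0, Submodule.zero_mem N, map_zero ρ⟩
    · rintro a b _ _ ⟨v₁, hv₁, hρ₁⟩ ⟨v₂, hv₂, hρ₂⟩
      exact ⟨v₁ + v₂, N.add_mem hv₁ hv₂, by rw [map_add, hρ₁, hρ₂]⟩
    · rintro c a _ ⟨v, hvN, hv⟩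
      obtain ⟨Cs, hCs⟩ := hπsurj c
      exact ⟨Cs • v, hNclosed Cs v hvN, by rw [hρcompat, hCs, hv]⟩
  have hkerφ : ∀ x : M, φ x = 0 ↔ x ∈ N ⊔ P := by
    intro x
    constructor
    · intro hx
      have hx' : ρ x ∈ Q₀ := by
        rw [hφ, Submodule.Quotient.mk_eq_zero] at hx
        exact hx
      obtain ⟨v, hvN, hv⟩ := hlift _ hx'
      have h0 : ρ (x - v) = 0 := by rw [map_sub, hv, sub_self]
      obtain ⟨y, hy⟩ := (hρker _).mp h0
      have hxv : x - v ∈ P := Submodule.subset_span ⟨y, hy⟩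
      have hxx : x = v + (x - v) := by abel
      rw [hxx]
      exact Submodule.add_mem _ (Submodule.mem_sup_left hvN) (Submodule.mem_sup_right hxv)
    · intro hx
      obtain ⟨a, haN, b, hbP, rfl⟩ := Submodule.mem_sup.mp hx
      rw [hφ, Submodule.Quotient.mk_eq_zero, map_add, hker2 b hbP, add_zero]
      exact hker1 a haN
  have hkereq : φ.ker = (N ⊔ P).toAddSubgroup := by
    ext x
    rw [AddMonoidHom.mem_ker]
    exact (hkerφ x).trans (Iff.rfl)
  exact ⟨(QuotientAddGroup.quotientAddEquivOfEq hkereq.symm).trans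
    (QuotientAddGroup.quotientKerEquivOfSurjective φ hφsurj)⟩
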